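/- Fix M ≥ 6. Given real parameters ρ > 0, θ > 0, u ∈ ℝ and f_3, ..., f_M ∈ ℝ (with the conventions f_1 = f_2 = 0), let A^{ML} be the (M+1)×(M+1) real matrix with rows and columns indexed 1,...,M+1 whose first four rows are (u, ρ, 0, ..., 0), (θ/ρ, u, 1, 0, ..., 0), (0, 2θ, u, 6/ρ, 0, ..., 0), (0, 4f_3, ρθ/2, u, 4, 0, ..., 0); whose row k for 5 ≤ k ≤ M has entries h_{k,1} = −θ f_{k−2}/ρ, h_{k,2} = k f_{k−1}, h_{k,3} = (θ/2) f_{k−4} + ((k−2)/2) f_{k−2}, h_{k,4} = −(3/ρ) f_{k−3} (this entry only for k ≥ 6), h_{k,k−1} = θ, h_{k,k} = u, h_{k,k+1} = k, and all other entries 0; and whose last row (row M+1) is (a_0, a_1, ..., a_M) for given reals a_0, ..., a_M. Then the last associated polynomial q_{M+1} of the unreduced lower Hessenberg matrix A^{ML} satisfies, with z = (x − u)/√θ: q_{M+1}(x) = (θ^{(M+1)/2}/M!)·He_{M+1}(z) − (a_M − u)·(θ^{M/2}/M!)·He_M(z) + (θ^{(M+1)/2}/(M−1)! − a_{M−1}·θ^{(M−1)/2}/(M−1)!)·He_{M−1}(z)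 − Σ_{k=4}^{M−2} a_k·(θ^{k/2}/k!)·He_k(z) + (−θ^{3/2} f_{M−2}/(2ρ) − a_3·θ^{3/2}/6)·He_3(z) + (−θ f_{M−1}/ρ + (a_M − u)·θ f_{M−2}/(2ρ) + Σ_{k=6}^{M} a_{k−1}·θ f_{k−3}/(2ρ) − a_2·θ/ρ)·He_2(z) + (−θ^{3/2} f_{M−2}/ρ + (a_M − u)·θ^{1/2} f_{M−1}/ρ + Σ_{k=5}^{M} a_{k−1}·θ^{1/2} f_{k−2}/ρ − a_1·θ^{1/2}/ρ)·He_1(z) + (−θ f_{M−1}/ρ − a_0)·He_0(z), for all x ∈ ℝ. -/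

import Mathlib

/-- The superdiagonal entry `h_{i+1, i+2}` (1-based) of `H`, with the convention
`h_{n, n+1} = 1`.  Here `i` is 0-based. -/
def superEntry {n : ℕ} (H : Matrix (Fin n) (Fin n) ℝ) (i : ℕ) : ℝ :=
  if h : i + 1 < n then H ⟨i, by omega⟩ ⟨i + 1, h⟩ else 1

/-- The entry `h_{i+1, j+1}` (1-based) of `H`, with `0` outside the matrix.
Here `i, j` are 0-based. -/
def lowEntry {n : ℕ} (H : Matrix (Fin n) (Fin n) ℝ) (i j : ℕ) : ℝ :=
  if h : i < n ∧ j < n then H ⟨i, h.1⟩ ⟨j, h.2⟩ else 0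

/-- `H` is an unreduced lower Hessenberg matrix: `h_{ij} = 0` for `j > i + 1`
(1-based), and all superdiagonal entries `h_{i,i+1}` are nonzero. -/
def IsUnreducedLowerHessenberg {n : ℕ} (H : Matrix (Fin n) (Fin n) ℝ) : Prop :=
  (∀ i j : Fin n, (i : ℕ) + 1 < (j : ℕ) → H i j = 0) ∧
  (∀ i : ℕ, ∀ h : i + 1 < n, H ⟨i, by omega⟩ ⟨i + 1, h⟩ ≠ 0)

/-- The associated polynomial sequence of a matrix `H` (intended: unreduced lower
Hessenberg): `q 0 = 1` and
`q (i+1) = (1 / h_{i+1,i+2}) * (X * q i − ∑_{j=0}^{i} h_{i+1,j+1} * q j)`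
(1-based entries), with the convention `h_{n,n+1} = 1`. -/
noncomputable def assocPoly {n : ℕ} (H : Matrix (Fin n) (Fin n) ℝ) : ℕ → Polynomial ℝ
  | 0 => 1
  | i + 1 =>
      Polynomial.C (superEntry H i)⁻¹ *
        (Polynomial.X * assocPoly H i -
          ∑ j : Fin (i + 1), Polynomial.C (lowEntry H i j) * assocPoly H j)

/-- The probabilists' Hermite polynomials, as real functions:
`He 0 x = 1`, `He 1 x = x`, `He (k+1) x = x * He k x − k * He (k−1) x`. -/
noncomputable def He : ℕ → ℝ → ℝ
  | 0, _ => 1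
  | 1, x => x
  | n + 2, x => x * He (n + 1) x - ((n : ℝ) + 1) * He n x

/-- The coefficient matrix `A^{ML}` of the machine-learned moment closure system for the
BGK equation, of size `(M+1) × (M+1)`, built from the primitive variables
`ρ, u, θ`, the higher moments `f : ℕ → ℝ` (with the conventions `f 1 = f 2 = 0`
imposed as hypotheses), and the last-row entries `a 0, …, a M`.  Rows and columns
are indexed `1, …, M+1` (internally `0`-based). -/
noncomputable def mlClosureMatrix (M : ℕ) (ρ u θ : ℝ) (f : ℕ → ℝ) (a : ℕ → ℝ) :
    Matrix (Fin (M + 1)) (Fin (M + 1)) ℝ :=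
  Matrix.of fun i j =>
    let r : ℕ := (i : ℕ) + 1
    let c : ℕ := (j : ℕ) + 1
    if r = 1 then (if c = 1 then u else if c = 2 then ρ else 0)
    else if r = 2 then (if c = 1 then θ / ρ else if c = 2 then u else if c = 3 then 1 else 0)
    else if r = 3 then (if c = 2 then 2 * θ else if c = 3 then u else if c = 4 then 6 / ρ else 0)
    else if r = 4 then
      (if c = 2 then 4 * f 3 else if c = 3 then ρ * θ / 2 else if c = 4 then u
       else if c = 5 then 4 else 0)
    else if r ≤ M then
      (if c = 1 then -(θ * f (r - 2)) / ρ
       else if c = 2 then (r : ℝ) * f (r - 1)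
       else if c = 3 then θ / 2 * f (r - 4) + ((r : ℝ) - 2) / 2 * f (r - 2)
       else if c = 4 ∧ 6 ≤ r then -(3 / ρ) * f (r - 3)
       else if c = r - 1 then θ
       else if c = r then u
       else if c = r + 1 then (r : ℝ)
       else 0)
    else a (c - 1)


lemma He_add_two (n : ℕ) (x : ℝ) : He (n+2) x = x * He (n+1) x - ((n:ℝ)+1) * He n x := rfl

lemma He_zero (x : ℝ) : He 0 x = 1 := rfl
lemma He_one (x : ℝ) : He 1 x = x := rfl
lemma He_two (x : ℝ) : He 2 x = x^2 - 1 := by rw [show (2:ℕ) = 0+2 from rfl, He_add_two]; simp [He_one, He_zero]; ring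
lemma He_three (x : ℝ) : He 3 x = x^3 - 3*x := by rw [show (3:ℕ) = 1+2 from rfl, He_add_two, He_two]; simp [He_one]; ring
lemma He_four (x : ℝ) : He 4 x = x^4 - 6*x^2 + 3 := by
  have h := He_add_two 2 x; norm_num at h; rw [h, He_three, He_two]; ring
lemma He_five (x : ℝ) : He 5 x = x^5 - 10*x^3 + 15*x := by
  have h := He_add_two 3 x; norm_num at h; rw [h, He_four, He_three]; ring

lemma assocPoly_eval_succ {n : ℕ} (H : Matrix (Fin n) (Fin n) ℝ) (i : ℕ) (x : ℝ) :
    (assocPoly H (i+1)).eval x = (superEntry H i)⁻¹ *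
      (x * (assocPoly H i).eval x -
        ∑ j ∈ Finset.range (i+1), lowEntry H i j * (assocPoly H j).eval x) := by
  rw [assocPoly, Polynomial.eval_mul, Polynomial.eval_C, Polynomial.eval_sub,
    Polynomial.eval_mul, Polynomial.eval_X, Polynomial.eval_finset_sum]
  simp only [Polynomial.eval_mul, Polynomial.eval_C]
  rw [Fin.sum_univ_eq_sum_range (fun j => lowEntry H i j * (assocPoly H j).eval x)]

lemma assocPoly_eval_zero {n : ℕ} (H : Matrix (Fin n) (Fin n) ℝ) (x : ℝ) :
    (assocPoly H 0).eval x = 1 := by rw [assocPoly]; simp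

section
variable (M : ℕ) (ρ u θ : ℝ) (f a : ℕ → ℝ)

lemma low_gen (i j : ℕ) (hi : i < M + 1) (hj : j < M + 1) :
    lowEntry (mlClosureMatrix M ρ u θ f a) i j =
      (if i + 1 = 1 then (if j + 1 = 1 then u else if j + 1 = 2 then ρ else 0)
      else if i + 1 = 2 then (if j + 1 = 1 then θ / ρ else if j + 1 = 2 then u else if j + 1 = 3 then 1 else 0)
      else if i + 1 = 3 then (if j + 1 = 2 then 2 * θ else if j + 1 = 3 then u else if j + 1 = 4 then 6 / ρ else 0)
      else if i + 1 = 4 then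
        (if j + 1 = 2 then 4 * f 3 else if j + 1 = 3 then ρ * θ / 2 else if j + 1 = 4 then u
         else if j + 1 = 5 then 4 else 0)
      else if i + 1 ≤ M then
        (if j + 1 = 1 then -(θ * f (i + 1 - 2)) / ρ
         else if j + 1 = 2 then ((i:ℝ) + 1) * f (i + 1 - 1)
         else if j + 1 = 3 then θ / 2 * f (i + 1 - 4) + (((i:ℝ) + 1) - 2) / 2 * f (i + 1 - 2)
         else if j + 1 = 4 ∧ 6 ≤ i + 1 then -(3 / ρ) * f (i + 1 - 3)
         else if j + 1 = i + 1 - 1 then θ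
         else if j + 1 = i + 1 then u
         else if j + 1 = i + 1 + 1 then ((i:ℝ) + 1)
         else 0)
      else a (j + 1 - 1)) := by
  unfold lowEntry mlClosureMatrix
  rw [dif_pos ⟨hi, hj⟩]
  simp only [Matrix.of_apply]
  push_cast
  norm_num

lemma super_gen (i : ℕ) (h : i + 1 < M + 1) :
    superEntry (mlClosureMatrix M ρ u θ f a) i =
      lowEntry (mlClosureMatrix M ρ u θ f a) i (i+1) := by
  unfold superEntry lowEntry
  rw [dif_pos h, dif_pos ⟨by omega, h⟩]

lemma super_top : superEntry (mlClosureMatrix M ρ u θ f a) M = 1 := by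
  unfold superEntry; rw [dif_neg (by omega)]

lemma low_last (j : ℕ) (hj : j ≤ M) (hM : 6 ≤ M) :
    lowEntry (mlClosureMatrix M ρ u θ f a) M j = a j := by
  rw [low_gen M ρ u θ f a M j (by omega) (by omega),
    if_neg (by omega), if_neg (by omega), if_neg (by omega), if_neg (by omega),
    if_neg (by omega)]
  norm_num

end

/-- evaluated associated polynomial -/
noncomputable def Q (M : ℕ) (ρ u θ : ℝ) (f a : ℕ → ℝ) (x : ℝ) (i : ℕ) : ℝ :=
  (assocPoly (mlClosureMatrix M ρ u θ f a) i).eval x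

section
variable (M : ℕ) (ρ u θ : ℝ) (f a : ℕ → ℝ) (x : ℝ)

lemma Q_zero : Q M ρ u θ f a x 0 = 1 := assocPoly_eval_zero _ x

lemma Q_succ (i : ℕ) :
    Q M ρ u θ f a x (i+1) = (superEntry (mlClosureMatrix M ρ u θ f a) i)⁻¹ *
      (x * Q M ρ u θ f a x i -
        ∑ j ∈ Finset.range (i+1),
          lowEntry (mlClosureMatrix M ρ u θ f a) i j * Q M ρ u θ f a x j) :=
  assocPoly_eval_succ _ i x

end

section
variable (M : ℕ) (ρ u s : ℝ) (f a : ℕ → ℝ) (x z : ℝ)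

lemma Q_one (hM : 6 ≤ M) (hρ : ρ ≠ 0) (hx : x = u + s * z) :
    Q M ρ u (s^2) f a x 1 = s / ρ * He 1 z := by
  have e0 : lowEntry (mlClosureMatrix M ρ u (s^2) f a) 0 0 = u := by
    rw [low_gen _ _ _ _ _ _ 0 0 (by omega) (by omega)]; norm_num
  have eS : superEntry (mlClosureMatrix M ρ u (s^2) f a) 0 = ρ := by
    rw [super_gen _ _ _ _ _ _ 0 (by omega), low_gen _ _ _ _ _ _ 0 1 (by omega) (by omega)]
    norm_num
  rw [Q_succ, eS, Finset.sum_range_one, e0, Q_zero, hx, He_one]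
  field_simp
  ring

lemma Q_two (hM : 6 ≤ M) (hρ : ρ ≠ 0) (hx : x = u + s * z) :
    Q M ρ u (s^2) f a x 2 = s^2 / ρ * He 2 z := by
  have e0 : lowEntry (mlClosureMatrix M ρ u (s^2) f a) 1 0 = s^2 / ρ := by
    rw [low_gen _ _ _ _ _ _ 1 0 (by omega) (by omega)]; norm_num
  have e1 : lowEntry (mlClosureMatrix M ρ u (s^2) f a) 1 1 = u := by
    rw [low_gen _ _ _ _ _ _ 1 1 (by omega) (by omega)]; norm_num
  have eS : superEntry (mlClosureMatrix M ρ u (s^2) f a) 1 = 1 := by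
    rw [super_gen _ _ _ _ _ _ 1 (by omega), low_gen _ _ _ _ _ _ 1 2 (by omega) (by omega)]
    norm_num
  rw [Q_succ, eS, Finset.sum_range_succ, Finset.sum_range_one, e0, e1, Q_zero,
    Q_one M ρ u s f a x z hM hρ hx, hx, He_two, He_one]
  field_simp; ring

lemma Q_three (hM : 6 ≤ M) (hρ : ρ ≠ 0) (hf1 : f 1 = 0) (hf2 : f 2 = 0)
    (hx : x = u + s * z) :
    Q M ρ u (s^2) f a x 3 = s^3 / 6 * He 3 z := by
  have e0 : lowEntry (mlClosureMatrix M ρ u (s^2) f a) 2 0 = 0 := by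
    rw [low_gen _ _ _ _ _ _ 2 0 (by omega) (by omega)]; norm_num
  have e1 : lowEntry (mlClosureMatrix M ρ u (s^2) f a) 2 1 = 2 * s^2 := by
    rw [low_gen _ _ _ _ _ _ 2 1 (by omega) (by omega)]; norm_num
  have e2 : lowEntry (mlClosureMatrix M ρ u (s^2) f a) 2 2 = u := by
    rw [low_gen _ _ _ _ _ _ 2 2 (by omega) (by omega)]; norm_num
  have eS : superEntry (mlClosureMatrix M ρ u (s^2) f a) 2 = 6 / ρ := by
    rw [super_gen _ _ _ _ _ _ 2 (by omega), low_gen _ _ _ _ _ _ 2 3 (by omega) (by omega)]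
    norm_num
  rw [Q_succ, eS, Finset.sum_range_succ, Finset.sum_range_succ, Finset.sum_range_one,
    e0, e1, e2, Q_zero, Q_one M ρ u s f a x z hM hρ hx, Q_two M ρ u s f a x z hM hρ hx,
    hx, He_three, He_two, He_one]
  field_simp; ring

lemma Q_four (hM : 6 ≤ M) (hρ : ρ ≠ 0) (hf1 : f 1 = 0) (hf2 : f 2 = 0)
    (hx : x = u + s * z) :
    Q M ρ u (s^2) f a x 4 = s^4 / 24 * He 4 z - s * f 3 / ρ * He 1 z := by
  have e0 : lowEntry (mlClosureMatrix M ρ u (s^2) f a) 3 0 = 0 := by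
    rw [low_gen _ _ _ _ _ _ 3 0 (by omega) (by omega)]; norm_num
  have e1 : lowEntry (mlClosureMatrix M ρ u (s^2) f a) 3 1 = 4 * f 3 := by
    rw [low_gen _ _ _ _ _ _ 3 1 (by omega) (by omega)]; norm_num
  have e2 : lowEntry (mlClosureMatrix M ρ u (s^2) f a) 3 2 = ρ * s^2 / 2 := by
    rw [low_gen _ _ _ _ _ _ 3 2 (by omega) (by omega)]; norm_num
  have e3 : lowEntry (mlClosureMatrix M ρ u (s^2) f a) 3 3 = u := by
    rw [low_gen _ _ _ _ _ _ 3 3 (by omega) (by omega)]; norm_num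
  have eS : superEntry (mlClosureMatrix M ρ u (s^2) f a) 3 = 4 := by
    rw [super_gen _ _ _ _ _ _ 3 (by omega), low_gen _ _ _ _ _ _ 3 4 (by omega) (by omega)]
    norm_num
  rw [Q_succ, eS, Finset.sum_range_succ, Finset.sum_range_succ, Finset.sum_range_succ,
    Finset.sum_range_one, e0, e1, e2, e3, Q_zero, Q_one M ρ u s f a x z hM hρ hx,
    Q_two M ρ u s f a x z hM hρ hx, Q_three M ρ u s f a x z hM hρ hf1 hf2 hx,
    hx, He_four, He_three, He_two, He_one]
  field_simp; ring

lemma Q_five (hM : 6 ≤ M) (hρ : ρ ≠ 0) (hf1 : f 1 = 0) (hf2 : f 2 = 0)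
    (hx : x = u + s * z) :
    Q M ρ u (s^2) f a x 5 = s^5 / 120 * He 5 z - s * f 4 / ρ * He 1 z
      - s^2 * f 3 / (2*ρ) * He 2 z := by
  have e0 : lowEntry (mlClosureMatrix M ρ u (s^2) f a) 4 0 = -(s^2 * f 3) / ρ := by
    rw [low_gen _ _ _ _ _ _ 4 0 (by omega) (by omega), if_neg (by omega), if_neg (by omega),
      if_neg (by omega), if_neg (by omega), if_pos (by omega)]
    norm_num
  have e1 : lowEntry (mlClosureMatrix M ρ u (s^2) f a) 4 1 = 5 * f 4 := by
    rw [low_gen _ _ _ _ _ _ 4 1 (by omega) (by omega), if_neg (by omega), if_neg (by omega),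
      if_neg (by omega), if_neg (by omega), if_pos (by omega)]
    norm_num
  have e2 : lowEntry (mlClosureMatrix M ρ u (s^2) f a) 4 2 = 3 / 2 * f 3 := by
    rw [low_gen _ _ _ _ _ _ 4 2 (by omega) (by omega), if_neg (by omega), if_neg (by omega),
      if_neg (by omega), if_neg (by omega), if_pos (by omega)]
    norm_num [hf1]
  have e3 : lowEntry (mlClosureMatrix M ρ u (s^2) f a) 4 3 = s^2 := by
    rw [low_gen _ _ _ _ _ _ 4 3 (by omega) (by omega), if_neg (by omega), if_neg (by omega),
      if_neg (by omega), if_neg (by omega), if_pos (by omega), if_neg (by omega),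
      if_neg (by omega), if_neg (by omega), if_neg (by omega), if_pos (by omega)]
  have e4 : lowEntry (mlClosureMatrix M ρ u (s^2) f a) 4 4 = u := by
    rw [low_gen _ _ _ _ _ _ 4 4 (by omega) (by omega), if_neg (by omega), if_neg (by omega),
      if_neg (by omega), if_neg (by omega), if_pos (by omega), if_neg (by omega),
      if_neg (by omega), if_neg (by omega), if_neg (by omega), if_neg (by omega),
      if_pos (by omega)]
  have eS : superEntry (mlClosureMatrix M ρ u (s^2) f a) 4 = 5 := by
    rw [super_gen _ _ _ _ _ _ 4 (by omega), low_gen _ _ _ _ _ _ 4 5 (by omega) (by omega),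
      if_neg (by omega), if_neg (by omega), if_neg (by omega), if_neg (by omega),
      if_pos (by omega), if_neg (by omega), if_neg (by omega), if_neg (by omega),
      if_neg (by omega), if_neg (by omega), if_neg (by omega), if_pos (by omega)]
    norm_num
  rw [Q_succ, eS, Finset.sum_range_succ, Finset.sum_range_succ, Finset.sum_range_succ,
    Finset.sum_range_succ, Finset.sum_range_one, e0, e1, e2, e3, e4, Q_zero,
    Q_one M ρ u s f a x z hM hρ hx, Q_two M ρ u s f a x z hM hρ hx,
    Q_three M ρ u s f a x z hM hρ hf1 hf2 hx, Q_four M ρ u s f a x z hM hρ hf1 hf2 hx,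
    hx, He_five, He_four, He_three, He_two, He_one]
  field_simp; ring

end


section
variable (M : ℕ) (ρ u s : ℝ) (f a : ℕ → ℝ) (x z : ℝ)

lemma Q_step (t : ℕ) (ht : t + 6 ≤ M) (hρ : ρ ≠ 0) (hf1 : f 1 = 0) (hf2 : f 2 = 0)
    (hx : x = u + s * z)
    (h5 : Q M ρ u (s^2) f a x (t+5) = s^(t+5) / (((t+5).factorial : ℕ) : ℝ) * He (t+5) z
      - s * f (t+4) / ρ * He 1 z - s^2 * f (t+3) / (2*ρ) * He 2 z)
    (h4 : Q M ρ u (s^2) f a x (t+4) = s^(t+4) / (((t+4).factorial : ℕ) : ℝ) * He (t+4) z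
      - s * f (t+3) / ρ * He 1 z - s^2 * f (t+2) / (2*ρ) * He 2 z) :
    Q M ρ u (s^2) f a x (t+6) = s^(t+6) / (((t+6).factorial : ℕ) : ℝ) * He (t+6) z
      - s * f (t+5) / ρ * He 1 z - s^2 * f (t+4) / (2*ρ) * He 2 z := by
  have hM : 6 ≤ M := by omega
  have e0 : lowEntry (mlClosureMatrix M ρ u (s^2) f a) (t+5) 0 = -(s^2 * f (t+4)) / ρ := by
    rw [low_gen _ _ _ _ _ _ (t+5) 0 (by omega) (by omega), if_neg (by omega),
      if_neg (by omega), if_neg (by omega), if_neg (by omega), if_pos (by omega),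
      if_pos (by omega), show t+5+1-2 = t+4 from by omega]
  have e1 : lowEntry (mlClosureMatrix M ρ u (s^2) f a) (t+5) 1 = ((t:ℝ)+6) * f (t+5) := by
    rw [low_gen _ _ _ _ _ _ (t+5) 1 (by omega) (by omega), if_neg (by omega),
      if_neg (by omega), if_neg (by omega), if_neg (by omega), if_pos (by omega),
      if_neg (by omega), if_pos (by omega), show t+5+1-1 = t+5 from by omega]
    push_cast; ring
  have e2 : lowEntry (mlClosureMatrix M ρ u (s^2) f a) (t+5) 2 = s^2 / 2 * f (t+2) + ((t:ℝ)+4) / 2 * f (t+4) := by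
    rw [low_gen _ _ _ _ _ _ (t+5) 2 (by omega) (by omega), if_neg (by omega),
      if_neg (by omega), if_neg (by omega), if_neg (by omega), if_pos (by omega),
      if_neg (by omega), if_neg (by omega), if_pos (by omega),
      show t+5+1-4 = t+2 from by omega, show t+5+1-2 = t+4 from by omega]
    push_cast; ring
  have e3 : lowEntry (mlClosureMatrix M ρ u (s^2) f a) (t+5) 3 = -(3 / ρ) * f (t+3) := by
    rw [low_gen _ _ _ _ _ _ (t+5) 3 (by omega) (by omega), if_neg (by omega),
      if_neg (by omega), if_neg (by omega), if_neg (by omega), if_pos (by omega),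
      if_neg (by omega), if_neg (by omega), if_neg (by omega), if_pos (by omega),
      show t+5+1-3 = t+3 from by omega]
  have ez : ∀ j, 4 ≤ j → j ≤ t+3 → lowEntry (mlClosureMatrix M ρ u (s^2) f a) (t+5) j = 0 := by
    intro j h1 h2
    rw [low_gen _ _ _ _ _ _ (t+5) j (by omega) (by omega), if_neg (by omega),
      if_neg (by omega), if_neg (by omega), if_neg (by omega), if_pos (by omega),
      if_neg (by omega), if_neg (by omega), if_neg (by omega), if_neg (by omega),
      if_neg (by omega), if_neg (by omega), if_neg (by omega)]
  have e4 : lowEntry (mlClosureMatrix M ρ u (s^2) f a) (t+5) (t+4) = s^2 := by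
    rw [low_gen _ _ _ _ _ _ (t+5) (t+4) (by omega) (by omega), if_neg (by omega),
      if_neg (by omega), if_neg (by omega), if_neg (by omega), if_pos (by omega),
      if_neg (by omega), if_neg (by omega), if_neg (by omega), if_neg (by omega),
      if_pos (by omega)]
  have e5 : lowEntry (mlClosureMatrix M ρ u (s^2) f a) (t+5) (t+5) = u := by
    rw [low_gen _ _ _ _ _ _ (t+5) (t+5) (by omega) (by omega), if_neg (by omega),
      if_neg (by omega), if_neg (by omega), if_neg (by omega), if_pos (by omega),
      if_neg (by omega), if_neg (by omega), if_neg (by omega), if_neg (by omega),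
      if_neg (by omega), if_pos (by omega)]
  have eS : superEntry (mlClosureMatrix M ρ u (s^2) f a) (t+5) = ((t:ℝ)+6) := by
    rw [super_gen _ _ _ _ _ _ (t+5) (by omega),
      low_gen _ _ _ _ _ _ (t+5) (t+6) (by omega) (by omega), if_neg (by omega),
      if_neg (by omega), if_neg (by omega), if_neg (by omega), if_pos (by omega),
      if_neg (by omega), if_neg (by omega), if_neg (by omega), if_neg (by omega),
      if_neg (by omega), if_neg (by omega), if_pos (by omega)]
    push_cast; ring
  have hrec : Q M ρ u (s^2) f a x (t+6) = (superEntry (mlClosureMatrix M ρ u (s^2) f a) (t+5))⁻¹ *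
      (x * Q M ρ u (s^2) f a x (t+5) - ∑ j ∈ Finset.range (t+6), lowEntry (mlClosureMatrix M ρ u (s^2) f a) (t+5) j * Q M ρ u (s^2) f a x j) :=
    Q_succ M ρ u (s^2) f a x (t+5)
  have hs1 : (∑ j ∈ Finset.range (t+6), lowEntry (mlClosureMatrix M ρ u (s^2) f a) (t+5) j * Q M ρ u (s^2) f a x j) =
      (∑ j ∈ Finset.range (t+5), lowEntry (mlClosureMatrix M ρ u (s^2) f a) (t+5) j * Q M ρ u (s^2) f a x j) + lowEntry (mlClosureMatrix M ρ u (s^2) f a) (t+5) (t+5) * Q M ρ u (s^2) f a x (t+5) :=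
    Finset.sum_range_succ _ _
  have hs2 : (∑ j ∈ Finset.range (t+5), lowEntry (mlClosureMatrix M ρ u (s^2) f a) (t+5) j * Q M ρ u (s^2) f a x j) =
      (∑ j ∈ Finset.range (t+4), lowEntry (mlClosureMatrix M ρ u (s^2) f a) (t+5) j * Q M ρ u (s^2) f a x j) + lowEntry (mlClosureMatrix M ρ u (s^2) f a) (t+5) (t+4) * Q M ρ u (s^2) f a x (t+4) :=
    Finset.sum_range_succ _ _
  have hs3 : (∑ j ∈ Finset.range (t+4), lowEntry (mlClosureMatrix M ρ u (s^2) f a) (t+5) j * Q M ρ u (s^2) f a x j) =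
      (∑ j ∈ Finset.Ico 0 4, lowEntry (mlClosureMatrix M ρ u (s^2) f a) (t+5) j * Q M ρ u (s^2) f a x j) + ∑ j ∈ Finset.Ico 4 (t+4), lowEntry (mlClosureMatrix M ρ u (s^2) f a) (t+5) j * Q M ρ u (s^2) f a x j := by
    rw [Finset.range_eq_Ico]
    exact (Finset.sum_Ico_consecutive _ (by omega) (by omega)).symm
  have hs4 : (∑ j ∈ Finset.Ico 4 (t+4), lowEntry (mlClosureMatrix M ρ u (s^2) f a) (t+5) j * Q M ρ u (s^2) f a x j) = 0 := by
    apply Finset.sum_eq_zero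
    intro j hj
    rw [Finset.mem_Ico] at hj
    rw [ez j hj.1 (by omega), zero_mul]
  have hs5 : (∑ j ∈ Finset.Ico 0 4, lowEntry (mlClosureMatrix M ρ u (s^2) f a) (t+5) j * Q M ρ u (s^2) f a x j) =
      lowEntry (mlClosureMatrix M ρ u (s^2) f a) (t+5) 0 * Q M ρ u (s^2) f a x 0 + lowEntry (mlClosureMatrix M ρ u (s^2) f a) (t+5) 1 * Q M ρ u (s^2) f a x 1
      + lowEntry (mlClosureMatrix M ρ u (s^2) f a) (t+5) 2 * Q M ρ u (s^2) f a x 2 + lowEntry (mlClosureMatrix M ρ u (s^2) f a) (t+5) 3 * Q M ρ u (s^2) f a x 3 := by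
    rw [← Finset.range_eq_Ico]
    simp only [Finset.sum_range_succ, Finset.sum_range_zero, zero_add]
  have hHe : He (t+6) z = z * He (t+5) z - ((t:ℝ)+5) * He (t+4) z := by
    have h := He_add_two (t+4) z
    rw [show t+4+2 = t+6 from by omega, show t+4+1 = t+5 from by omega] at h
    rw [h]; push_cast; ring
  have hfac6 : (((t+6).factorial : ℕ) : ℝ) = ((t:ℝ)+6) * (((t+5).factorial : ℕ) : ℝ) := by
    rw [show t+6 = (t+5)+1 from by omega, Nat.factorial_succ]; push_cast; ring
  have hfac5 : (((t+5).factorial : ℕ) : ℝ) = ((t:ℝ)+5) * (((t+4).factorial : ℕ) : ℝ) := by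
    rw [show t+5 = (t+4)+1 from by omega, Nat.factorial_succ]; push_cast; ring
  have hne4 : (((t+4).factorial : ℕ) : ℝ) ≠ 0 :=
    (Nat.cast_pos.mpr (Nat.factorial_pos _)).ne'
  have hne6 : ((t:ℝ)+6) ≠ 0 := by positivity
  have hne5 : ((t:ℝ)+5) ≠ 0 := by positivity
  rw [hrec, eS, hs1, hs2, hs3, hs4, hs5, e0, e1, e2, e3, e4, e5, Q_zero,
    Q_one M ρ u s f a x z hM hρ hx, Q_two M ρ u s f a x z hM hρ hx,
    Q_three M ρ u s f a x z hM hρ hf1 hf2 hx, h5, h4, hHe, hfac6, hfac5,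
    He_three, He_two, He_one, hx]
  field_simp
  ring
end

section
variable (M : ℕ) (ρ u s : ℝ) (f a : ℕ → ℝ) (x z : ℝ)

lemma Q_closed (hM : 6 ≤ M) (hρ : ρ ≠ 0) (hf1 : f 1 = 0) (hf2 : f 2 = 0)
    (hx : x = u + s * z) :
    ∀ k, 3 ≤ k → k ≤ M →
      Q M ρ u (s^2) f a x k = s^k / ((k.factorial : ℕ) : ℝ) * He k z
        - s * f (k-1) / ρ * He 1 z - s^2 * f (k-2) / (2*ρ) * He 2 z := by
  intro k
  induction k using Nat.strong_induction_on with
  | _ k IH =>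
    intro h3 hk
    obtain h|h|h|h : k = 3 ∨ k = 4 ∨ k = 5 ∨ 6 ≤ k := by omega
    · subst h
      rw [Q_three M ρ u s f a x z hM hρ hf1 hf2 hx]
      norm_num [Nat.factorial, hf1, hf2]
    · subst h
      rw [Q_four M ρ u s f a x z hM hρ hf1 hf2 hx]
      norm_num [Nat.factorial, hf2]
    · subst h
      rw [Q_five M ρ u s f a x z hM hρ hf1 hf2 hx]
      norm_num [Nat.factorial]
    · obtain ⟨t, rfl⟩ : ∃ t, k = t + 6 := ⟨k - 6, by omega⟩
      have H5 := IH (t+5) (by omega) (by omega) (by omega)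
      have H4 := IH (t+4) (by omega) (by omega) (by omega)
      rw [show t+5-1 = t+4 from by omega, show t+5-2 = t+3 from by omega] at H5
      rw [show t+4-1 = t+3 from by omega, show t+4-2 = t+2 from by omega] at H4
      rw [show t+6-1 = t+5 from by omega, show t+6-2 = t+4 from by omega]
      exact Q_step M ρ u s f a x z t (by omega) hρ hf1 hf2 hx H5 H4

end



set_option maxHeartbeats 4000000

/-- **The last associated polynomial `q_{M+1}` of `A^{ML}` in the Hermite basis.**
With `z = (x − u)/√θ`, the polynomial `q_{M+1}` associated with the unreduced lower
Hessenberg matrix `A^{ML}` (whose last row is `(a_0, …, a_M)`) is an explicit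
combination of `He_0(z), …, He_{M+1}(z)`. -/
theorem assocPoly_top_mlClosureMatrix_hermite (M : ℕ) (hM : 6 ≤ M)
    (ρ u θ : ℝ) (hρ : 0 < ρ) (hθ : 0 < θ)
    (f : ℕ → ℝ) (hf1 : f 1 = 0) (hf2 : f 2 = 0) (a : ℕ → ℝ) :
    ∀ x : ℝ,
      (assocPoly (mlClosureMatrix M ρ u θ f a) (M + 1)).eval x =
        Real.sqrt θ ^ (M + 1) / (Nat.factorial M : ℝ) * He (M + 1) ((x - u) / Real.sqrt θ)
        - (a M - u) * (Real.sqrt θ ^ M / (Nat.factorial M : ℝ)) * He M ((x - u) / Real.sqrt θ)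
        + (Real.sqrt θ ^ (M + 1) / (Nat.factorial (M - 1) : ℝ) -
            a (M - 1) * Real.sqrt θ ^ (M - 1) / (Nat.factorial (M - 1) : ℝ)) *
            He (M - 1) ((x - u) / Real.sqrt θ)
        - (∑ k ∈ Finset.Icc 4 (M - 2),
            a k * (Real.sqrt θ ^ k / (Nat.factorial k : ℝ)) * He k ((x - u) / Real.sqrt θ))
        + (-(Real.sqrt θ ^ 3 * f (M - 2) / (2 * ρ)) - a 3 * Real.sqrt θ ^ 3 / 6) *
            He 3 ((x - u) / Real.sqrt θ)
        + (-(θ * f (M - 1) / ρ) + (a M - u) * θ * f (M - 2) / (2 * ρ) +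
            (∑ k ∈ Finset.Icc 6 M, a (k - 1) * θ * f (k - 3) / (2 * ρ)) - a 2 * θ / ρ) *
            He 2 ((x - u) / Real.sqrt θ)
        + (-(Real.sqrt θ ^ 3 * f (M - 2) / ρ) + (a M - u) * Real.sqrt θ * f (M - 1) / ρ +
            (∑ k ∈ Finset.Icc 5 M, a (k - 1) * Real.sqrt θ * f (k - 2) / ρ) -
            a 1 * Real.sqrt θ / ρ) * He 1 ((x - u) / Real.sqrt θ)
        + (-(θ * f (M - 1) / ρ) - a 0) * He 0 ((x - u) / Real.sqrt θ) := by
  intro x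
  obtain ⟨m, rfl⟩ : ∃ m, M = m + 6 := ⟨M - 6, by omega⟩
  obtain ⟨s, hs, rfl⟩ : ∃ s : ℝ, 0 < s ∧ θ = s^2 :=
    ⟨Real.sqrt θ, Real.sqrt_pos.2 hθ, (Real.sq_sqrt hθ.le).symm⟩
  have hρ' : ρ ≠ 0 := ne_of_gt hρ
  have hs' : s ≠ 0 := ne_of_gt hs
  rw [Real.sqrt_sq hs.le]
  simp only [show m+6-1 = m+5 from by omega, show m+6-2 = m+4 from by omega,
    show m+6+1 = m+7 from by omega]
  obtain ⟨z, rfl⟩ : ∃ z : ℝ, x = u + s * z := ⟨(x - u) / s, by field_simp; ring⟩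
  rw [show (u + s * z - u) / s = z from by field_simp; ring]
  have hx : u + s * z = u + s * z := rfl
  have hQdef : (assocPoly (mlClosureMatrix (m+6) ρ u (s^2) f a) (m+7)).eval (u + s * z) = Q (m+6) ρ u (s^2) f a (u + s * z) (m+7) := rfl
  rw [hQdef]
  have hrec : Q (m+6) ρ u (s^2) f a (u + s * z) (m+7) = (superEntry (mlClosureMatrix (m+6) ρ u (s^2) f a) (m+6))⁻¹ *
      ((u + s * z) * Q (m+6) ρ u (s^2) f a (u + s * z) (m+6) - ∑ j ∈ Finset.range (m+7), lowEntry (mlClosureMatrix (m+6) ρ u (s^2) f a) (m+6) j * Q (m+6) ρ u (s^2) f a (u + s * z) j) :=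
    Q_succ (m+6) ρ u (s^2) f a (u + s * z) (m+6)
  have hlast : (∑ j ∈ Finset.range (m+7), lowEntry (mlClosureMatrix (m+6) ρ u (s^2) f a) (m+6) j * Q (m+6) ρ u (s^2) f a (u + s * z) j) =
      ∑ j ∈ Finset.range (m+7), a j * Q (m+6) ρ u (s^2) f a (u + s * z) j := by
    refine Finset.sum_congr rfl (fun j hj => ?_)
    rw [Finset.mem_range] at hj
    rw [low_last (m+6) ρ u (s^2) f a j (by omega) (by omega)]
  have h1 : (∑ j ∈ Finset.range (m+7), a j * Q (m+6) ρ u (s^2) f a (u + s * z) j) =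
      (∑ j ∈ Finset.range (m+6), a j * Q (m+6) ρ u (s^2) f a (u + s * z) j) + a (m+6) * Q (m+6) ρ u (s^2) f a (u + s * z) (m+6) :=
    Finset.sum_range_succ _ _
  have h2 : (∑ j ∈ Finset.range (m+6), a j * Q (m+6) ρ u (s^2) f a (u + s * z) j) =
      (∑ j ∈ Finset.Ico 0 3, a j * Q (m+6) ρ u (s^2) f a (u + s * z) j) + ∑ j ∈ Finset.Ico 3 (m+6), a j * Q (m+6) ρ u (s^2) f a (u + s * z) j := by
    rw [Finset.range_eq_Ico]
    exact (Finset.sum_Ico_consecutive _ (by omega) (by omega)).symm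
  have h3 : (∑ j ∈ Finset.Ico 0 3, a j * Q (m+6) ρ u (s^2) f a (u + s * z) j) =
      a 0 * Q (m+6) ρ u (s^2) f a (u + s * z) 0 + a 1 * Q (m+6) ρ u (s^2) f a (u + s * z) 1 + a 2 * Q (m+6) ρ u (s^2) f a (u + s * z) 2 := by
    rw [← Finset.range_eq_Ico]
    simp only [Finset.sum_range_succ, Finset.sum_range_zero, zero_add]
  have hstep : ∀ j ∈ Finset.Ico 3 (m+6), a j * Q (m+6) ρ u (s^2) f a (u + s * z) j =
      a j * (s^j / ((j.factorial : ℕ) : ℝ)) * He j z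
      - (a j * f (j-1)) * (s / ρ * He 1 z)
      - (a j * f (j-2)) * (s^2 / (2*ρ) * He 2 z) := by
    intro j hj
    rw [Finset.mem_Ico] at hj
    rw [Q_closed (m+6) ρ u s f a (u + s * z) z (by omega) hρ' hf1 hf2 hx j hj.1 (by omega)]
    ring
  have hbulk : (∑ j ∈ Finset.Ico 3 (m+6), a j * Q (m+6) ρ u (s^2) f a (u + s * z) j) =
      (∑ j ∈ Finset.Ico 3 (m+6), a j * (s^j / ((j.factorial : ℕ) : ℝ)) * He j z)
      - (∑ j ∈ Finset.Ico 3 (m+6), a j * f (j-1)) * (s / ρ * He 1 z)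
      - (∑ j ∈ Finset.Ico 3 (m+6), a j * f (j-2)) * (s^2 / (2*ρ) * He 2 z) := by
    rw [Finset.sum_congr rfl hstep, Finset.sum_sub_distrib, Finset.sum_sub_distrib,
      ← Finset.sum_mul, ← Finset.sum_mul]
  have hE1 : (∑ j ∈ Finset.Ico 3 (m+6), a j * (s^j / ((j.factorial : ℕ) : ℝ)) * He j z) =
      a 3 * (s^3 / ((Nat.factorial 3 : ℕ) : ℝ)) * He 3 z
      + ∑ j ∈ Finset.Ico 4 (m+6), a j * (s^j / ((j.factorial : ℕ) : ℝ)) * He j z :=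
    Finset.sum_eq_sum_Ico_succ_bot (by omega) _
  have hE2 : (∑ j ∈ Finset.Ico 4 (m+6), a j * (s^j / ((j.factorial : ℕ) : ℝ)) * He j z) =
      (∑ j ∈ Finset.Ico 4 (m+5), a j * (s^j / ((j.factorial : ℕ) : ℝ)) * He j z)
      + a (m+5) * (s^(m+5) / (((m+5).factorial : ℕ) : ℝ)) * He (m+5) z :=
    Finset.sum_Ico_succ_top (by omega) _
  have hB1 : (∑ j ∈ Finset.Ico 3 (m+6), a j * f (j-1)) =
      a 3 * f 2 + ∑ j ∈ Finset.Ico 4 (m+6), a j * f (j-1) :=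
    Finset.sum_eq_sum_Ico_succ_bot (by omega) _
  have hC1 : (∑ j ∈ Finset.Ico 3 (m+6), a j * f (j-2)) =
      a 3 * f 1 + ∑ j ∈ Finset.Ico 4 (m+6), a j * f (j-2) :=
    Finset.sum_eq_sum_Ico_succ_bot (by omega) _
  have hC2 : (∑ j ∈ Finset.Ico 4 (m+6), a j * f (j-2)) =
      a 4 * f 2 + ∑ j ∈ Finset.Ico 5 (m+6), a j * f (j-2) :=
    Finset.sum_eq_sum_Ico_succ_bot (by omega) _
  have hR1 : (∑ k ∈ Finset.Icc 4 (m+4), a k * (s ^ k / (Nat.factorial k : ℝ)) * He k z) =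
      ∑ j ∈ Finset.Ico 4 (m+5), a j * (s^j / ((j.factorial : ℕ) : ℝ)) * He j z := by
    rw [show Finset.Icc 4 (m+4) = Finset.Ico 4 (m+5) from by ext n; simp; omega]
  have hR2 : (∑ k ∈ Finset.Icc 6 (m+6), a (k - 1) * s^2 * f (k - 3) / (2 * ρ)) =
      (∑ j ∈ Finset.Ico 5 (m+6), a j * f (j-2)) * (s^2 / (2*ρ)) := by
    rw [show Finset.Icc 6 (m+6) = Finset.Ico 6 (m+7) from by ext n; simp; omega,
      Finset.sum_Ico_eq_sum_range, Finset.sum_Ico_eq_sum_range,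
      show m+7-6 = m+1 from by omega, show m+6-5 = m+1 from by omega, Finset.sum_mul]
    refine Finset.sum_congr rfl (fun i _ => ?_)
    rw [show 6+i-1 = 5+i from by omega, show 6+i-3 = 5+i-2 from by omega]
    ring
  have hR3 : (∑ k ∈ Finset.Icc 5 (m+6), a (k - 1) * s * f (k - 2) / ρ) =
      (∑ j ∈ Finset.Ico 4 (m+6), a j * f (j-1)) * (s / ρ) := by
    rw [show Finset.Icc 5 (m+6) = Finset.Ico 5 (m+7) from by ext n; simp; omega,
      Finset.sum_Ico_eq_sum_range, Finset.sum_Ico_eq_sum_range,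
      show m+7-5 = m+2 from by omega, show m+6-4 = m+2 from by omega, Finset.sum_mul]
    refine Finset.sum_congr rfl (fun i _ => ?_)
    rw [show 5+i-1 = 4+i from by omega, show 5+i-2 = 4+i-1 from by omega]
    ring
  have hHe7 : He (m+7) z = z * He (m+6) z - ((m:ℝ)+6) * He (m+5) z := by
    have h := He_add_two (m+5) z
    rw [show m+5+2 = m+7 from by omega, show m+5+1 = m+6 from by omega] at h
    rw [h]; push_cast; ring
  have hQM : Q (m+6) ρ u (s^2) f a (u + s * z) (m+6) = s^(m+6) / (((m+6).factorial : ℕ) : ℝ) * He (m+6) z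
      - s * f (m+5) / ρ * He 1 z - s^2 * f (m+4) / (2*ρ) * He 2 z := by
    have h := Q_closed (m+6) ρ u s f a (u + s * z) z (by omega) hρ' hf1 hf2 hx (m+6) (by omega) (by omega)
    rw [show m+6-1 = m+5 from by omega, show m+6-2 = m+4 from by omega] at h
    exact h
  have hfac : (((m+6).factorial : ℕ) : ℝ) = ((m:ℝ)+6) * (((m+5).factorial : ℕ) : ℝ) := by
    rw [show m+6 = (m+5)+1 from by omega, Nat.factorial_succ]; push_cast; ring
  have hne5 : (((m+5).factorial : ℕ) : ℝ) ≠ 0 := (Nat.cast_pos.mpr (Nat.factorial_pos _)).ne'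
  have hne6 : ((m:ℝ)+6) ≠ 0 := by positivity
  rw [hrec, super_top, inv_one, one_mul, hlast, h1, h2, h3, hbulk, hE1, hE2, hB1, hC1, hC2,
    hR1, hR2, hR3, hQM, Q_zero, Q_one (m+6) ρ u s f a (u + s * z) z (by omega) hρ' hx,
    Q_two (m+6) ρ u s f a (u + s * z) z (by omega) hρ' hx, hHe7, hfac, hf1, hf2,
    He_three, He_two, He_one, He_zero,
    show ((Nat.factorial 3 : ℕ) : ℝ) = 6 from by norm_num [Nat.factorial]]
  field_simp
  ring
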